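/- arXiv:2009.01290 — 5 statements merged into one kernel-verified Lean document; each statement's English description precedes it below -/
import Mathlib

section
/- For 0 < m < n, the fundamental de la Vallée Poussin polynomials Φ_{n,k}^m(x) = λ_k ∑_{j=0}^{n+m−1} μ_{n,j}^m p_j(x_k) p_j(x), with μ_{n,j}^m = 1 for 0 ≤ j ≤ n−m and μ_{n,j}^m = (n+m−j)/(2m) for n−m < j < n+m, satisfy the interpolation property Φ_{n,k}^m(x_h) = δ_{h,k} for all h, k ∈ {1,…,n}. -/
open Finset Real


/-- Orthonormal Chebyshev polynomial of the second kind (trigonometric form). -/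
noncomputable def chebP (n : ℕ) (x : ℝ) : ℝ :=
  Real.sqrt (2 / Real.pi) * Real.sin ((n + 1) * Real.arccos x) / Real.sin (Real.arccos x)

/-- Chebyshev nodes of the second kind: zeros of `chebP n`. -/
noncomputable def chebNode (n k : ℕ) : ℝ := Real.cos (k * Real.pi / (n + 1))

/-- Christoffel numbers for the weight √(1-x²). -/
noncomputable def chebWeight (n k : ℕ) : ℝ :=
  Real.pi / (n + 1) * Real.sin (k * Real.pi / (n + 1)) ^ 2

/-- The de la Vallée Poussin filter coefficients. -/
noncomputable def vpFilter (n m j : ℕ) : ℝ :=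
  if j ≤ n - m then 1 else ((n : ℝ) + m - j) / (2 * m)

/-- The fundamental VP polynomials. -/
noncomputable def vpPhi (n m k : ℕ) (x : ℝ) : ℝ :=
  chebWeight n k *
    ∑ j ∈ Finset.range (n + m), vpFilter n m j * chebP j (chebNode n k) * chebP j x

lemma cos_sum_zero (M : ℕ) (φ : ℝ)
    (h1 : Complex.exp (φ * Complex.I) ^ M = 1)
    (h2 : Complex.exp (φ * Complex.I) ≠ 1) :
    ∑ t ∈ Finset.range M, Real.cos (t * φ) = 0 := by
  have key : ∀ t : ℕ, Real.cos (t * φ) = (Complex.exp (φ * Complex.I) ^ t).re := by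
    intro t
    rw [← Complex.exp_nat_mul]
    have : (t : ℂ) * (φ * Complex.I) = ((t * φ : ℝ) : ℂ) * Complex.I := by push_cast; ring
    rw [this, Complex.exp_ofReal_mul_I_re]
  simp only [key]
  rw [← Complex.re_sum, geom_sum_eq h2, h1]
  simp

lemma exp_pow_eq_one (φ : ℝ) (M : ℕ) (q : ℤ) (hq : (M : ℝ) * φ = q * (2 * Real.pi)) :
    Complex.exp (φ * Complex.I) ^ M = 1 := by
  rw [← Complex.exp_nat_mul]
  have : (M : ℂ) * (φ * Complex.I) = (q : ℂ) * (2 * Real.pi * Complex.I) := by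
    have h2 : ((((M : ℝ) * φ : ℝ)) : ℂ) = (((q : ℝ) * (2 * Real.pi) : ℝ) : ℂ) :=
      congrArg Complex.ofReal hq
    push_cast at h2
    linear_combination Complex.I * h2
  rw [this, Complex.exp_int_mul_two_pi_mul_I]

lemma exp_ne_one (φ : ℝ) (h0 : φ ≠ 0) (h2 : |φ| < 2 * Real.pi) :
    Complex.exp (φ * Complex.I) ≠ 1 := by
  intro h
  rw [Complex.exp_eq_one_iff] at h
  obtain ⟨q, hq⟩ := h
  have him : φ = q * (2 * Real.pi) := by
    have := congrArg Complex.im hq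
    simpa using this
  rcases lt_trichotomy q 0 with hq' | hq' | hq'
  · have hq2 : q ≤ -1 := by omega
    have : (q : ℝ) ≤ -1 := by exact_mod_cast hq2
    nlinarith [Real.pi_pos, abs_lt.mp h2]
  · apply h0; rw [him, hq']; simp
  · have hq2 : 1 ≤ q := by omega
    have : (1 : ℝ) ≤ q := by exact_mod_cast hq2
    nlinarith [Real.pi_pos, abs_lt.mp h2]

lemma full_sum (n h k : ℕ) (h1 : 1 ≤ h) (hn : h ≤ n) (k1 : 1 ≤ k) (kn : k ≤ n) :
    ∑ t ∈ Finset.range (2 * (n + 1)),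
      Real.sin (t * (h * Real.pi / (n + 1))) * Real.sin (t * (k * Real.pi / (n + 1)))
      = if h = k then (n + 1 : ℝ) else 0 := by
  have hn1 : ((n : ℝ) + 1) ≠ 0 := by positivity
  have hpi := Real.pi_pos
  set c : ℝ := Real.pi / (n + 1) with hc
  have hcpos : 0 < c := by positivity
  have hcπ : ((n : ℝ) + 1) * c = Real.pi := by rw [hc]; field_simp
  have hh1 : (1 : ℝ) ≤ (h : ℝ) := by exact_mod_cast h1
  have hk1 : (1 : ℝ) ≤ (k : ℝ) := by exact_mod_cast k1
  have hhn : (h : ℝ) ≤ (n : ℝ) := by exact_mod_cast hn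
  have hkn : (k : ℝ) ≤ (n : ℝ) := by exact_mod_cast kn
  set α : ℝ := ((h : ℝ) - k) * c with hα
  set β : ℝ := ((h : ℝ) + k) * c with hβ
  have ht : ∀ t : ℕ, Real.sin (t * (h * Real.pi / (n + 1))) * Real.sin (t * (k * Real.pi / (n + 1)))
      = (Real.cos (t * α) - Real.cos (t * β)) / 2 := by
    intro t
    have e1 : (t : ℝ) * α = t * (h * Real.pi / (n + 1)) - t * (k * Real.pi / (n + 1)) := by
      rw [hα, hc]; ring
    have e2 : (t : ℝ) * β = t * (h * Real.pi / (n + 1)) + t * (k * Real.pi / (n + 1)) := by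
      rw [hβ, hc]; ring
    rw [e1, e2, Real.cos_sub, Real.cos_add]; ring
  simp only [ht]
  rw [← Finset.sum_div, Finset.sum_sub_distrib]
  have hβsum : ∑ t ∈ Finset.range (2 * (n + 1)), Real.cos (t * β) = 0 := by
    apply cos_sum_zero
    · apply exp_pow_eq_one _ _ ((h : ℤ) + k)
      push_cast [hβ, hc]
      field_simp
    · apply exp_ne_one
      · nlinarith
      · have h0 : (0 : ℝ) < β := by nlinarith
        rw [abs_of_pos h0, hβ]
        nlinarith
  rw [hβsum, sub_zero]
  by_cases hhk : h = k
  · subst hhk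
    simp only [if_pos rfl]
    have : ∀ t : ℕ, Real.cos (t * α) = 1 := by
      intro t
      have : α = 0 := by rw [hα]; ring
      simp [this]
    simp only [this]
    rw [Finset.sum_const, Finset.card_range]
    push_cast
    ring
  · rw [if_neg hhk]
    have hαsum : ∑ t ∈ Finset.range (2 * (n + 1)), Real.cos (t * α) = 0 := by
      apply cos_sum_zero
      · apply exp_pow_eq_one _ _ ((h : ℤ) - k)
        push_cast [hα, hc]
        field_simp
      · apply exp_ne_one
        · have : (h : ℝ) ≠ (k : ℝ) := by exact_mod_cast fun e => hhk (Nat.cast_injective e)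
          rw [hα]
          intro hz
          rcases mul_eq_zero.mp hz with h' | h'
          · exact this (by linarith)
          · exact absurd h' (ne_of_gt hcpos)
        · rw [hα, abs_mul, abs_of_pos hcpos]
          have : |(h : ℝ) - k| ≤ n := by
            rw [abs_le]; constructor <;> linarith
          nlinarith
    rw [hαsum]
    simp

lemma sin_shift_add (n h : ℕ) (x : ℝ) :
    Real.sin ((((n : ℝ) + 1) + x) * ((h : ℝ) * Real.pi / ((n : ℝ) + 1)))
      = Real.cos ((h : ℝ) * Real.pi) * Real.sin (x * ((h : ℝ) * Real.pi / ((n : ℝ) + 1))) := by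
  have hn1 : ((n : ℝ) + 1) ≠ 0 := by positivity
  have e : (((n : ℝ) + 1) + x) * ((h : ℝ) * Real.pi / ((n : ℝ) + 1))
      = (h : ℝ) * Real.pi + x * ((h : ℝ) * Real.pi / ((n : ℝ) + 1)) := by
    field_simp
  rw [e, Real.sin_add, Real.sin_nat_mul_pi]
  ring

lemma sin_shift_sub (n h : ℕ) (x : ℝ) :
    Real.sin ((((n : ℝ) + 1) - x) * ((h : ℝ) * Real.pi / ((n : ℝ) + 1)))
      = -(Real.cos ((h : ℝ) * Real.pi) * Real.sin (x * ((h : ℝ) * Real.pi / ((n : ℝ) + 1)))) := by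
  have hn1 : ((n : ℝ) + 1) ≠ 0 := by positivity
  have e : (((n : ℝ) + 1) - x) * ((h : ℝ) * Real.pi / ((n : ℝ) + 1))
      = (h : ℝ) * Real.pi - x * ((h : ℝ) * Real.pi / ((n : ℝ) + 1)) := by
    field_simp
  rw [e, Real.sin_sub, Real.sin_nat_mul_pi]
  ring

lemma ortho (n h k : ℕ) (h1 : 1 ≤ h) (hn : h ≤ n) (k1 : 1 ≤ k) (kn : k ≤ n) :
    ∑ j ∈ Finset.range n,
      Real.sin ((j + 1) * ((h : ℝ) * Real.pi / (n + 1))) *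
        Real.sin ((j + 1) * ((k : ℝ) * Real.pi / (n + 1)))
      = if h = k then ((n : ℝ) + 1) / 2 else 0 := by
  set F : ℕ → ℝ := fun t =>
    Real.sin (t * ((h : ℝ) * Real.pi / (n + 1))) * Real.sin (t * ((k : ℝ) * Real.pi / (n + 1)))
    with hF
  have hFat : ∀ t : ℕ,
      Real.sin ((t + 1 : ℝ) * ((h : ℝ) * Real.pi / (n + 1))) *
        Real.sin ((t + 1 : ℝ) * ((k : ℝ) * Real.pi / (n + 1))) = F (t + 1) := by
    intro t; rw [hF]; push_cast; ring_nf
  have hFn1 : F (n + 1) = 0 := by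
    rw [hF]
    have e : ((n + 1 : ℕ) : ℝ) = ((n : ℝ) + 1) + 0 := by push_cast; ring
    simp only [e, sin_shift_add]
    simp
  have hsymm : ∀ s : ℕ, s ≤ n + 1 → F (n + 1 + s) = F (n + 1 - s) := by
    intro s hs
    rw [hF]
    have e1 : ((n + 1 + s : ℕ) : ℝ) = ((n : ℝ) + 1) + s := by push_cast; ring
    have e2 : ((n + 1 - s : ℕ) : ℝ) = ((n : ℝ) + 1) - s := by
      rw [Nat.cast_sub hs]; push_cast; ring
    simp only [e1, e2, sin_shift_add, sin_shift_sub]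
    ring
  have hfull := full_sum n h k h1 hn k1 kn
  have hsplit : ∑ t ∈ Finset.range (2 * (n + 1)), F t
      = ∑ t ∈ Finset.range (n + 1), F t + ∑ s ∈ Finset.range (n + 1), F (n + 1 + s) := by
    have e : 2 * (n + 1) = (n + 1) + (n + 1) := by ring
    rw [e, Finset.sum_range_add]
  have hUp : ∑ s ∈ Finset.range (n + 1), F (n + 1 + s)
      = ∑ s ∈ Finset.range n, F (s + 1) := by
    rw [Finset.sum_congr rfl fun s hs => hsymm s (by
      have := Finset.mem_range.mp hs; omega)]
    have e : ∀ s ∈ Finset.range (n + 1), F (n + 1 - s) = (fun i => F (i + 1)) (n - s) := by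
      intro s hs
      have := Finset.mem_range.mp hs
      congr 1
      omega
    rw [Finset.sum_congr rfl e]
    have := Finset.sum_range_reflect (fun i => F (i + 1)) (n + 1)
    simp only [Nat.add_sub_cancel] at this
    calc ∑ s ∈ Finset.range (n + 1), (fun i => F (i + 1)) (n - s)
        = ∑ s ∈ Finset.range (n + 1), F (s + 1) := by
          have := Finset.sum_range_reflect (fun i => F (i + 1)) (n + 1)
          simpa using this
      _ = ∑ s ∈ Finset.range n, F (s + 1) + F (n + 1) := Finset.sum_range_succ _ _
      _ = ∑ s ∈ Finset.range n, F (s + 1) := by rw [hFn1, add_zero]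
  have hLow : ∑ t ∈ Finset.range (n + 1), F t = ∑ s ∈ Finset.range n, F (s + 1) := by
    rw [Finset.sum_range_succ' F n]
    have : F 0 = 0 := by rw [hF]; simp
    rw [this, add_zero]
  have key : (2 : ℝ) * ∑ s ∈ Finset.range n, F (s + 1) = if h = k then ((n : ℝ) + 1) else 0 := by
    rw [← hfull]
    have : ∑ t ∈ Finset.range (2 * (n + 1)),
        Real.sin (t * ((h : ℝ) * Real.pi / (n + 1))) * Real.sin (t * ((k : ℝ) * Real.pi / (n + 1)))
        = ∑ t ∈ Finset.range (2 * (n + 1)), F t := by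
      apply Finset.sum_congr rfl; intro t _; rw [hF]
    rw [this, hsplit, hUp, hLow]; ring
  have := key
  simp only [hFat]
  by_cases hhk : h = k
  · simp only [if_pos hhk] at this ⊢; linarith
  · simp only [if_neg hhk] at this ⊢; linarith

lemma reflect_cancel (M : ℕ) (g : ℕ → ℝ) (hneg : ∀ i < M, g (M - 1 - i) = - g i) :
    ∑ i ∈ Finset.range M, g i = 0 := by
  have hrefl := Finset.sum_range_reflect g M
  have h2 : ∑ i ∈ Finset.range M, g i = - ∑ i ∈ Finset.range M, g i := by
    conv_lhs => rw [← hrefl]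
    rw [Finset.sum_congr rfl (fun i hi => hneg i (Finset.mem_range.mp hi))]
    rw [Finset.sum_neg_distrib]
  linarith

lemma filter_sum (n m : ℕ) (hm : 0 < m) (hmn : m < n) (G : ℕ → ℝ)
    (hGn1 : G (n + 1) = 0)
    (hsymm : ∀ s : ℕ, s ≤ n + 1 → G (n + 1 + s) = G (n + 1 - s)) :
    ∑ j ∈ Finset.range (n + m), vpFilter n m j * G (j + 1)
      = ∑ j ∈ Finset.range n, G (j + 1) := by
  have hmr : (0 : ℝ) < m := by exact_mod_cast hm
  classical
  set δf : ℕ → ℝ := fun j => vpFilter n m j - (if j < n then (1 : ℝ) else 0) with hδf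
  have hind : ∑ j ∈ Finset.range (n + m), (if j < n then (1 : ℝ) else 0) * G (j + 1)
      = ∑ j ∈ Finset.range n, G (j + 1) := by
    rw [← Finset.sum_subset (Finset.range_subset_range.mpr (Nat.le_add_right n m))
      (fun x hx hx' => by
        rw [if_neg (by simpa using hx'), zero_mul])]
    apply Finset.sum_congr rfl
    intro j hj
    rw [if_pos (Finset.mem_range.mp hj), one_mul]
  suffices hD : ∑ j ∈ Finset.range (n + m), δf j * G (j + 1) = 0 by
    have expand : ∀ j ∈ Finset.range (n + m), vpFilter n m j * G (j + 1)
        = δf j * G (j + 1) + (if j < n then (1 : ℝ) else 0) * G (j + 1) := by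
      intro j _; rw [hδf]; ring
    rw [Finset.sum_congr rfl expand, Finset.sum_add_distrib, hD, hind, zero_add]
  have hsplitn : n + m = (n - m + 1) + (2 * m - 1) := by omega
  rw [hsplitn, Finset.sum_range_add]
  have hA : ∑ j ∈ Finset.range (n - m + 1), δf j * G (j + 1) = 0 := by
    apply Finset.sum_eq_zero
    intro j hj
    have hj' : j ≤ n - m := by have := Finset.mem_range.mp hj; omega
    have hz : δf j = 0 := by
      rw [hδf]
      simp only
      rw [vpFilter, if_pos hj', if_pos (by omega : j < n)]
      ring
    rw [hz, zero_mul]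
  rw [hA, zero_add]
  apply reflect_cancel
  intro i hi
  have hi' : i ≤ 2 * m - 2 := by omega
  rcases Nat.lt_trichotomy i (m - 1) with hlt | heq | hgt
  · -- i < m - 1 : left side at n + s, right side at n - s, s = m - 1 - i
    set s : ℕ := m - 1 - i with hs
    have hs1 : 1 ≤ s := by omega
    have hsm : s ≤ m - 1 := by omega
    have eL : n - m + 1 + (2 * m - 1 - 1 - i) = n + s := by omega
    have eR : n - m + 1 + i = n - s := by omega
    have eL1 : n + s + 1 = n + 1 + s := by omega
    have eR1 : n - s + 1 = n + 1 - s := by omega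
    rw [eL, eR, eL1, eR1, hsymm s (by omega)]
    have hδL : δf (n + s) = ((m : ℝ) - s) / (2 * m) := by
      rw [hδf]; simp only
      rw [vpFilter, if_neg (by omega), if_neg (by omega)]
      push_cast
      ring
    have hδR : δf (n - s) = ((s : ℝ) - m) / (2 * m) := by
      rw [hδf]; simp only
      rw [vpFilter, if_neg (by omega), if_pos (by omega)]
      rw [Nat.cast_sub (by omega : s ≤ n)]
      field_simp
      ring
    rw [hδL, hδR]
    ring
  · -- i = m - 1 : fixed point, G (n+1) = 0
    have eL : n - m + 1 + (2 * m - 1 - 1 - i) = n := by omega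
    have eR : n - m + 1 + i = n := by omega
    rw [eL, eR, hGn1]
    ring
  · -- i > m - 1 : left side at n - s, right side at n + s, s = i - (m - 1)
    set s : ℕ := i - (m - 1) with hs
    have hs1 : 1 ≤ s := by omega
    have hsm : s ≤ m - 1 := by omega
    have eL : n - m + 1 + (2 * m - 1 - 1 - i) = n - s := by omega
    have eR : n - m + 1 + i = n + s := by omega
    have eL1 : n - s + 1 = n + 1 - s := by omega
    have eR1 : n + s + 1 = n + 1 + s := by omega
    rw [eL, eR, eL1, eR1, hsymm s (by omega)]
    have hδR : δf (n + s) = ((m : ℝ) - s) / (2 * m) := by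
      rw [hδf]; simp only
      rw [vpFilter, if_neg (by omega), if_neg (by omega)]
      push_cast
      ring
    have hδL : δf (n - s) = ((s : ℝ) - m) / (2 * m) := by
      rw [hδf]; simp only
      rw [vpFilter, if_neg (by omega), if_pos (by omega)]
      rw [Nat.cast_sub (by omega : s ≤ n)]
      field_simp
      ring
    rw [hδL, hδR]
    ring

theorem vpPhi_interpolation (n m : ℕ) (hm : 0 < m) (hmn : m < n) :
    ∀ h k, 1 ≤ h → h ≤ n → 1 ≤ k → k ≤ n →
      vpPhi n m k (chebNode n h) = if h = k then 1 else 0 := by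
  intro h k h1 hn k1 kn
  have hπ := Real.pi_pos
  have hn1 : ((n : ℝ) + 1) ≠ 0 := by positivity
  have hh1 : (1 : ℝ) ≤ (h : ℝ) := by exact_mod_cast h1
  have hk1 : (1 : ℝ) ≤ (k : ℝ) := by exact_mod_cast k1
  have hhn : (h : ℝ) ≤ (n : ℝ) := by exact_mod_cast hn
  have hkn : (k : ℝ) ≤ (n : ℝ) := by exact_mod_cast kn
  have hθ : ∀ l : ℕ, 1 ≤ l → l ≤ n → 0 < Real.sin ((l : ℝ) * Real.pi / (n + 1)) := by
    intro l l1 ln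
    have hl1 : (1 : ℝ) ≤ (l : ℝ) := by exact_mod_cast l1
    have hln : (l : ℝ) ≤ (n : ℝ) := by exact_mod_cast ln
    apply Real.sin_pos_of_pos_of_lt_pi
    · positivity
    · rw [div_lt_iff₀ (by positivity)]
      nlinarith
  have sinh := hθ h h1 hn
  have sink := hθ k k1 kn
  have node : ∀ (j l : ℕ), 1 ≤ l → l ≤ n → chebP j (chebNode n l)
      = Real.sqrt (2 / Real.pi) * Real.sin (((j : ℝ) + 1) * ((l : ℝ) * Real.pi / (n + 1)))
        / Real.sin ((l : ℝ) * Real.pi / (n + 1)) := by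
    intro j l l1 ln
    have hl1 : (1 : ℝ) ≤ (l : ℝ) := by exact_mod_cast l1
    have hln : (l : ℝ) ≤ (n : ℝ) := by exact_mod_cast ln
    rw [chebP, chebNode, Real.arccos_cos (by positivity)
      (by rw [div_le_iff₀ (by positivity)]; nlinarith)]
  set G : ℕ → ℝ := fun t =>
    Real.sin ((t : ℝ) * ((k : ℝ) * Real.pi / (n + 1))) *
      Real.sin ((t : ℝ) * ((h : ℝ) * Real.pi / (n + 1))) with hG
  have hGn1 : G (n + 1) = 0 := by
    rw [hG]
    simp only
    have e : ((n + 1 : ℕ) : ℝ) * ((k : ℝ) * Real.pi / (n + 1)) = (k : ℝ) * Real.pi := by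
      push_cast; field_simp
    rw [e, Real.sin_nat_mul_pi, zero_mul]
  have hsymmG : ∀ s : ℕ, s ≤ n + 1 → G (n + 1 + s) = G (n + 1 - s) := by
    intro s hs
    rw [hG]
    simp only
    have e1 : ((n + 1 + s : ℕ) : ℝ) = ((n : ℝ) + 1) + s := by push_cast; ring
    have e2 : ((n + 1 - s : ℕ) : ℝ) = ((n : ℝ) + 1) - s := by
      rw [Nat.cast_sub hs]; push_cast; ring
    rw [e1, e2, sin_shift_add n k, sin_shift_add n h, sin_shift_sub n k, sin_shift_sub n h]
    ring
  have hsq : Real.sqrt (2 / Real.pi) * Real.sqrt (2 / Real.pi) = 2 / Real.pi :=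
    Real.mul_self_sqrt (by positivity)
  have sum_eq : ∑ j ∈ Finset.range (n + m), vpFilter n m j * chebP j (chebNode n k)
        * chebP j (chebNode n h)
      = (2 / Real.pi) / (Real.sin ((k : ℝ) * Real.pi / (n + 1))
          * Real.sin ((h : ℝ) * Real.pi / (n + 1)))
        * ∑ j ∈ Finset.range (n + m), vpFilter n m j * G (j + 1) := by
    rw [Finset.mul_sum]
    apply Finset.sum_congr rfl
    intro j _
    rw [node j k k1 kn, node j h h1 hn, hG]
    simp only
    have ecast : ((j + 1 : ℕ) : ℝ) = (j : ℝ) + 1 := by push_cast; ring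
    rw [ecast]
    obtain ⟨r, hr⟩ : ∃ r, Real.sqrt (2 / Real.pi) = r := ⟨_, rfl⟩
    rw [hr] at hsq ⊢
    rw [← hsq]
    field_simp
  rw [vpPhi, chebWeight, sum_eq,
    filter_sum n m hm hmn G hGn1 hsymmG]
  have hortho : ∑ j ∈ Finset.range n, G (j + 1) = if k = h then ((n : ℝ) + 1) / 2 else 0 := by
    rw [← ortho n k h k1 kn h1 hn]
    apply Finset.sum_congr rfl
    intro j _
    rw [hG]
    simp only
    have ecast : ((j + 1 : ℕ) : ℝ) = (j : ℝ) + 1 := by push_cast; ring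
    rw [ecast]
  rw [hortho]
  by_cases hhk : h = k
  · subst hhk
    rw [if_pos rfl, if_pos rfl]
    field_simp
    ring_nf
    ring_nf at sinh
    apply mul_inv_cancel₀
    rw [mul_comm π]
    exact ne_of_gt sinh
  · rw [if_neg hhk, if_neg (fun e => hhk e.symm)]
    ring
end

section
/- For 0 < m < n, the polynomials q_{n,j}^m, defined by q_{n,j}^m = p_j for 0 ≤ j ≤ n−m and q_{n,j}^m = ((m+n−j)/(2m)) p_j − ((m−n+j)/(2m)) p_{2n−j} for n−m < j < n, are pairwise orthogonal with respect to the inner product ⟨f,g⟩ = ∫_{−1}^{1} f(x)g(x)√(1−x²) dx, with ⟨q_{n,j}^m, q_{n,j}^m⟩ = 1 for 0 ≤ j ≤ n−m and ⟨q_{n,j}^m, q_{n,j}^m⟩ = (m² + (n−j)²)/(2m²) for n−m < j < n. -/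
/-- The VP orthogonal basis polynomials `q_{n,j}^m`. -/
noncomputable def vpQ (n m j : ℕ) (x : ℝ) : ℝ :=
  if j ≤ n - m then chebP j x
  else ((m : ℝ) + n - j) / (2 * m) * chebP j x - ((m : ℝ) - n + j) / (2 * m) * chebP (2 * n - j) x

/-- The modified VP basis polynomials `q̃_{n,j}^m`. -/
noncomputable def vpQt (n m j : ℕ) (x : ℝ) : ℝ :=
  if j ≤ n - m then chebP j x / (j + 1)
  else ((m : ℝ) + n - j) / (2 * m) * (chebP j x / (j + 1)) -
    ((m : ℝ) - n + j) / (2 * m) * (chebP (2 * n - j) x / (2 * (n : ℝ) - j + 1))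

/-- The inner product with Chebyshev weight of the second kind. -/
noncomputable def iprod (f g : ℝ → ℝ) : ℝ :=
  ∫ x in (-1 : ℝ)..1, f x * g x * Real.sqrt (1 - x ^ 2)

open Real MeasureTheory intervalIntegral Set

lemma integral_cos_nonzero (p : ℝ) (hp : p ≠ 0) (hsin : Real.sin (p * π) = 0) :
    ∫ θ in (0:ℝ)..π, Real.cos (p * θ) = 0 := by
  rw [intervalIntegral.integral_comp_mul_left (fun x => Real.cos x) hp]
  simp [integral_cos, hsin]

lemma sinsin (a b : ℕ) :
    ∫ θ in (0:ℝ)..π, Real.sin (((a:ℝ)+1) * θ) * Real.sin (((b:ℝ)+1) * θ)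
      = if a = b then π/2 else 0 := by
  by_cases hab : a = b
  · subst hab
    simp only [if_pos rfl]
    have h : ∀ θ : ℝ, Real.sin (((a:ℝ)+1) * θ) * Real.sin (((a:ℝ)+1) * θ)
        = Real.sin (((a:ℝ)+1) * θ) ^ 2 := fun θ => by ring
    rw [intervalIntegral.integral_congr (fun θ _ => h θ)]
    have hc : ((a:ℝ)+1) ≠ 0 := by positivity
    rw [intervalIntegral.integral_comp_mul_left (fun x => Real.sin x ^ 2) hc]
    rw [integral_sin_sq]
    have hs : Real.sin (((a:ℝ)+1) * π) = 0 := by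
      have := Real.sin_nat_mul_pi (a+1)
      push_cast at this
      convert this using 2
    rw [hs]
    simp
    field_simp
  · simp only [if_neg hab]
    have key : ∀ θ : ℝ, Real.sin (((a:ℝ)+1) * θ) * Real.sin (((b:ℝ)+1) * θ)
        = (Real.cos ((((a:ℝ)-b)) * θ) - Real.cos ((((a:ℝ)+b+2)) * θ)) / 2 := by
      intro θ
      have h := Real.cos_sub_cos ((((a:ℝ)-b)) * θ) ((((a:ℝ)+b+2)) * θ)
      have e1 : (((a:ℝ)-b) * θ + ((a:ℝ)+b+2) * θ)/2 = ((a:ℝ)+1)*θ := by ring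
      have e2 : (((a:ℝ)-b) * θ - ((a:ℝ)+b+2) * θ)/2 = -(((b:ℝ)+1)*θ) := by ring
      rw [e1, e2, Real.sin_neg] at h
      linarith
    rw [intervalIntegral.integral_congr (fun θ _ => key θ)]
    have i1 : IntervalIntegrable (fun θ => Real.cos ((((a:ℝ)-b)) * θ)) volume 0 π :=
      (Real.continuous_cos.comp (continuous_const.mul continuous_id)).intervalIntegrable _ _
    have i2 : IntervalIntegrable (fun θ => Real.cos ((((a:ℝ)+b+2)) * θ)) volume 0 π :=
      (Real.continuous_cos.comp (continuous_const.mul continuous_id)).intervalIntegrable _ _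
    have hsub : ∀ θ : ℝ, (Real.cos ((((a:ℝ)-b)) * θ) - Real.cos ((((a:ℝ)+b+2)) * θ)) / 2
        = (2:ℝ)⁻¹ * (Real.cos ((((a:ℝ)-b)) * θ) - Real.cos ((((a:ℝ)+b+2)) * θ)) := fun θ => by ring
    rw [intervalIntegral.integral_congr (fun θ _ => hsub θ)]
    rw [intervalIntegral.integral_const_mul, intervalIntegral.integral_sub i1 i2]
    have hp : ((a:ℝ)-b) ≠ 0 := by
      intro h; apply hab; exact_mod_cast sub_eq_zero.mp h
    have hsp : Real.sin (((a:ℝ)-b) * π) = 0 := by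
      have := Real.sin_int_mul_pi ((a:ℤ)-b)
      push_cast at this
      exact this
    have hq : ((a:ℝ)+b+2) ≠ 0 := by positivity
    have hsq : Real.sin (((a:ℝ)+b+2) * π) = 0 := by
      have := Real.sin_nat_mul_pi (a+b+2)
      push_cast at this
      convert this using 2
    rw [integral_cos_nonzero _ hp hsp, integral_cos_nonzero _ hq hsq]
    ring

lemma himg : Real.cos '' Set.Ioo 0 π = Set.Ioo (-1 : ℝ) 1 := by
  ext x
  constructor
  · rintro ⟨θ, ⟨h0, hπ⟩, rfl⟩
    constructor
    · have := Real.strictAntiOn_cos (Set.mem_Icc.mpr ⟨h0.le, hπ.le⟩)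
        (Set.mem_Icc.mpr ⟨Real.pi_pos.le, le_refl π⟩) hπ
      simpa [Real.cos_pi] using this
    · have := Real.strictAntiOn_cos (Set.mem_Icc.mpr ⟨le_refl 0, Real.pi_pos.le⟩)
        (Set.mem_Icc.mpr ⟨h0.le, hπ.le⟩) h0
      simpa [Real.cos_zero] using this
  · rintro ⟨h1, h2⟩
    refine ⟨Real.arccos x, ⟨Real.arccos_pos.mpr h2, ?_⟩, Real.cos_arccos h1.le h2.le⟩
    refine lt_of_le_of_ne (Real.arccos_le_pi x) (fun h => ?_)
    have := Real.arccos_eq_pi.mp h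
    linarith

lemma integrand_eq (i j : ℕ) : ∀ θ ∈ Set.Ioo (0:ℝ) π,
    |(-Real.sin θ)| • (chebP i (Real.cos θ) * chebP j (Real.cos θ) * Real.sqrt (1 - Real.cos θ ^ 2))
      = (2/π) * (Real.sin (((i:ℝ)+1) * θ) * Real.sin (((j:ℝ)+1) * θ)) := by
  rintro θ ⟨h0, hπ⟩
  have hsin : 0 < Real.sin θ := Real.sin_pos_of_pos_of_lt_pi h0 hπ
  have harc : Real.arccos (Real.cos θ) = θ := Real.arccos_cos h0.le hπ.le
  have hsqrt : Real.sqrt (1 - Real.cos θ ^ 2) = Real.sin θ := by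
    rw [← Real.sin_sq θ, Real.sqrt_sq hsin.le]
  have h2π : Real.sqrt (2/π) ^ 2 = 2/π := Real.sq_sqrt (by positivity)
  have key : ∀ A B : ℝ, Real.sin θ * (Real.sqrt (2/π) * A / Real.sin θ *
      (Real.sqrt (2/π) * B / Real.sin θ) * Real.sin θ) = Real.sqrt (2/π) ^ 2 * (A * B) := by
    intro A B
    have e2 : Real.sqrt 2 * Real.sqrt 2 = 2 := Real.mul_self_sqrt (by norm_num)
    have eπ : Real.sqrt π * Real.sqrt π = π := Real.mul_self_sqrt Real.pi_pos.le
    field_simp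
  simp only [chebP, harc, hsqrt, smul_eq_mul, abs_neg, abs_of_pos hsin]
  rw [key, h2π]

lemma hderiv : ∀ θ ∈ Set.Ioo (0:ℝ) π, HasDerivWithinAt Real.cos (-Real.sin θ) (Set.Ioo 0 π) θ :=
  fun θ _ => (Real.hasDerivAt_cos θ).hasDerivWithinAt

lemma hinj : Set.InjOn Real.cos (Set.Ioo 0 π) :=
  Real.injOn_cos.mono Set.Ioo_subset_Icc_self

lemma cheb_integrable (i j : ℕ) :
    IntervalIntegrable (fun x => chebP i x * chebP j x * Real.sqrt (1 - x ^ 2))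
      volume (-1) 1 := by
  rw [intervalIntegrable_iff_integrableOn_Ioo_of_le (by norm_num : (-1:ℝ) ≤ 1)]
  rw [← himg, integrableOn_image_iff_integrableOn_abs_deriv_smul measurableSet_Ioo hderiv hinj]
  have hcont : Continuous (fun θ : ℝ =>
      (2/π) * (Real.sin (((i:ℝ)+1)*θ) * Real.sin (((j:ℝ)+1)*θ))) := by continuity
  exact ((hcont.integrableOn_Icc (a := 0) (b := π)).mono_set
    Set.Ioo_subset_Icc_self).congr_fun
    (fun θ hθ => (integrand_eq i j θ hθ).symm) measurableSet_Ioo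

lemma intE (i j : ℕ) :
    ∫ x in (-1:ℝ)..1, chebP i x * chebP j x * Real.sqrt (1 - x ^ 2)
      = if i = j then 1 else 0 := by
  rw [intervalIntegral.integral_of_le (by norm_num : (-1:ℝ) ≤ 1),
    integral_Ioc_eq_integral_Ioo, ← himg,
    integral_image_eq_integral_abs_deriv_smul measurableSet_Ioo hderiv hinj,
    setIntegral_congr_fun measurableSet_Ioo (integrand_eq i j),
    ← integral_Ioc_eq_integral_Ioo, ← intervalIntegral.integral_of_le Real.pi_pos.le,
    intervalIntegral.integral_const_mul, sinsin]
  by_cases h : i = j <;> simp [h] <;> field_simp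

lemma iprod_comb (a b c d : ℕ) (α β γ δ : ℝ) :
    iprod (fun x => α * chebP a x + β * chebP b x)
          (fun x => γ * chebP c x + δ * chebP d x) =
      α*γ*(if a = c then (1:ℝ) else 0) + α*δ*(if a = d then (1:ℝ) else 0)
      + β*γ*(if b = c then (1:ℝ) else 0) + β*δ*(if b = d then (1:ℝ) else 0) := by
  unfold iprod
  have hpt : ∀ x : ℝ, (α * chebP a x + β * chebP b x) * (γ * chebP c x + δ * chebP d x)
          * Real.sqrt (1 - x ^ 2)
      = α*γ*(chebP a x * chebP c x * Real.sqrt (1-x^2))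
        + (α*δ*(chebP a x * chebP d x * Real.sqrt (1-x^2))
        + (β*γ*(chebP b x * chebP c x * Real.sqrt (1-x^2))
        + β*δ*(chebP b x * chebP d x * Real.sqrt (1-x^2)))) := fun x => by ring
  rw [intervalIntegral.integral_congr (fun x _ => hpt x)]
  rw [intervalIntegral.integral_add ((cheb_integrable a c).const_mul _)
      (((cheb_integrable a d).const_mul _).add
        (((cheb_integrable b c).const_mul _).add ((cheb_integrable b d).const_mul _))),
    intervalIntegral.integral_add ((cheb_integrable a d).const_mul _)
      (((cheb_integrable b c).const_mul _).add ((cheb_integrable b d).const_mul _)),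
    intervalIntegral.integral_add ((cheb_integrable b c).const_mul _)
      ((cheb_integrable b d).const_mul _)]
  simp only [intervalIntegral.integral_const_mul, intE]
  ring

lemma vpQ_rep_le (n m j : ℕ) (h : j ≤ n - m) :
    vpQ n m j = fun x => (1:ℝ) * chebP j x + 0 * chebP j x := by
  funext x; simp [vpQ, h]

lemma vpQ_rep_gt (n m j : ℕ) (h : ¬ j ≤ n - m) :
    vpQ n m j = fun x => (((m:ℝ) + n - j) / (2 * m)) * chebP j x
      + (-(((m:ℝ) - n + j) / (2 * m))) * chebP (2 * n - j) x := by
  funext x; simp [vpQ, h]; ring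

theorem vpQ_orthogonality (n m : ℕ) (hm : 0 < m) (hmn : m < n) :
    (∀ i j, i < n → j < n → i ≠ j → iprod (vpQ n m i) (vpQ n m j) = 0) ∧
    (∀ j, j ≤ n - m → iprod (vpQ n m j) (vpQ n m j) = 1) ∧
    (∀ j, n - m < j → j < n →
      iprod (vpQ n m j) (vpQ n m j) = ((m : ℝ) ^ 2 + ((n : ℝ) - j) ^ 2) / (2 * (m : ℝ) ^ 2)) := by
  have hm' : (m:ℝ) ≠ 0 := Nat.cast_ne_zero.mpr hm.ne'
  refine ⟨?_, ?_, ?_⟩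
  · intro i j hi hj hij
    by_cases h1 : i ≤ n - m <;> by_cases h2 : j ≤ n - m
    · rw [vpQ_rep_le n m i h1, vpQ_rep_le n m j h2, iprod_comb]
      simp [hij]
    · rw [vpQ_rep_le n m i h1, vpQ_rep_gt n m j h2, iprod_comb]
      have e1 : i ≠ 2 * n - j := by omega
      simp [hij, e1]
    · rw [vpQ_rep_gt n m i h1, vpQ_rep_le n m j h2, iprod_comb]
      have e1 : 2 * n - i ≠ j := by omega
      simp [hij, e1]
    · rw [vpQ_rep_gt n m i h1, vpQ_rep_gt n m j h2, iprod_comb]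
      have e1 : i ≠ 2 * n - j := by omega
      have e2 : 2 * n - i ≠ j := by omega
      have e3 : 2 * n - i ≠ 2 * n - j := by omega
      simp [hij, e1, e2, e3]
  · intro j hj
    rw [vpQ_rep_le n m j hj, iprod_comb]
    simp
  · intro j hj1 hj2
    have h : ¬ j ≤ n - m := by omega
    rw [vpQ_rep_gt n m j h, iprod_comb]
    have e1 : j ≠ 2 * n - j := by omega
    have e2 : 2 * n - j ≠ j := by omega
    simp only [if_pos rfl, if_true, if_neg e1, if_neg e2, mul_zero, mul_one, add_zero, zero_add]
    field_simp
    ring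
end

section
/- For 0 < m < n, the fundamental VP polynomial admits the basis change Φ_{n,k}^m(x) = λ_k ∑_{j=0}^{n−1} p_j(x_k) q_{n,j}^m(x), where q_{n,j}^m = p_j for j ≤ n−m and q_{n,j}^m = ((m+n−j)/(2m)) p_j − ((m−n+j)/(2m)) p_{2n−j} for n−m < j < n. -/
lemma arccos_node (n k : ℕ) (hk1 : 1 ≤ k) (hk2 : k ≤ n) :
    Real.arccos (chebNode n k) = k * Real.pi / (n + 1) := by
  apply Real.arccos_cos
  · positivity
  · rw [div_le_iff₀ (by positivity)]
    have : (k : ℝ) ≤ n := by exact_mod_cast hk2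
    nlinarith [Real.pi_pos]

lemma chebP_node_zero (n k : ℕ) (hk1 : 1 ≤ k) (hk2 : k ≤ n) :
    chebP n (chebNode n k) = 0 := by
  unfold chebP
  rw [arccos_node n k hk1 hk2]
  have h : ((n : ℝ) + 1) * (k * Real.pi / (n + 1)) = k * Real.pi := by
    field_simp
  rw [h, Real.sin_nat_mul_pi]
  simp

lemma chebP_node_reflect (n k j : ℕ) (hk1 : 1 ≤ k) (hk2 : k ≤ n) (hj : j ≤ 2 * n) :
    chebP (2 * n - j) (chebNode n k) = - chebP j (chebNode n k) := by
  unfold chebP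
  rw [arccos_node n k hk1 hk2]
  have hcast : ((2 * n - j : ℕ) : ℝ) = 2 * n - j := by
    push_cast [Nat.cast_sub hj]; ring
  have harg : (((2 * n - j : ℕ) : ℝ) + 1) * (k * Real.pi / (n + 1)) =
      (k : ℝ) * (2 * Real.pi) - ((j : ℝ) + 1) * (k * Real.pi / (n + 1)) := by
    rw [hcast]
    field_simp
    ring
  rw [harg]
  have h1 : Real.sin ((k : ℝ) * (2 * Real.pi)) = 0 := by
    have : (k : ℝ) * (2 * Real.pi) = ((2 * k : ℕ) : ℝ) * Real.pi := by push_cast; ring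
    rw [this, Real.sin_nat_mul_pi]
  have h2 : Real.cos ((k : ℝ) * (2 * Real.pi)) = 1 := Real.cos_nat_mul_two_pi k
  rw [Real.sin_sub, h1, h2]
  ring

theorem vpPhi_basis_change (n m : ℕ) (hm : 0 < m) (hmn : m < n) :
    ∀ k, 1 ≤ k → k ≤ n → ∀ x : ℝ,
      vpPhi n m k x =
        chebWeight n k * ∑ j ∈ Finset.range n, chebP j (chebNode n k) * vpQ n m j x := by
  intro k hk1 hk2 x
  unfold vpPhi
  congr 1
  set F : ℕ → ℝ := fun j => vpFilter n m j * chebP j (chebNode n k) * chebP j x with hF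
  set G : ℕ → ℝ := fun j => chebP j (chebNode n k) * vpQ n m j x with hG
  -- split the long sum
  have hsplit : ∑ j ∈ Finset.range (n + m), F j =
      ∑ j ∈ Finset.range n, F j + ∑ j ∈ Finset.Ico n (n + m), F j := by
    rw [Finset.range_eq_Ico, Finset.range_eq_Ico]
    exact (Finset.sum_Ico_consecutive F (Nat.zero_le n) (Nat.le_add_right n m)).symm
  have hFn : F n = 0 := by
    simp [hF, chebP_node_zero n k hk1 hk2]
  have htail1 : ∑ j ∈ Finset.Ico n (n + m), F j = ∑ j ∈ Finset.Ico (n + 1) (n + m), F j := by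
    rw [Finset.sum_eq_sum_Ico_succ_bot (by omega) F, hFn, zero_add]
  -- reindex the tail
  have htail2 : ∑ j ∈ Finset.Ico (n + 1) (n + m), F j =
      ∑ j ∈ Finset.Ico (n - m + 1) n, F (2 * n - j) := by
    apply Finset.sum_nbij' (fun j => 2 * n - j) (fun j => 2 * n - j)
    · intro a ha
      simp only [Finset.mem_Ico] at ha ⊢
      omega
    · intro a ha
      simp only [Finset.mem_Ico] at ha ⊢
      omega
    · intro a ha
      simp only [Finset.mem_Ico] at ha
      omega
    · intro a ha
      simp only [Finset.mem_Ico] at ha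
      omega
    · intro a ha
      simp only [Finset.mem_Ico] at ha
      congr 1
      omega
  -- the tail equals the correction terms
  have hcorr : ∀ j ∈ Finset.Ico (n - m + 1) n, F (2 * n - j) = G j - F j := by
    intro j hj
    simp only [Finset.mem_Ico] at hj
    have hj1 : ¬ (j ≤ n - m) := by omega
    have hj2 : ¬ (2 * n - j ≤ n - m) := by omega
    have hj3 : j ≤ 2 * n := by omega
    have hrefl := chebP_node_reflect n k j hk1 hk2 hj3
    have hcast : ((2 * n - j : ℕ) : ℝ) = 2 * n - j := by
      push_cast [Nat.cast_sub hj3]; ring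
    simp only [hF, hG, vpFilter, vpQ, if_neg hj1, if_neg hj2, hrefl, hcast]
    have hm' : (m : ℝ) ≠ 0 := by exact_mod_cast hm.ne'
    field_simp
    ring
  -- the correction terms vanish below n - m
  have hzero : ∀ j ∈ Finset.range n, j ∉ Finset.Ico (n - m + 1) n → G j - F j = 0 := by
    intro j hj hj'
    simp only [Finset.mem_range] at hj
    simp only [Finset.mem_Ico] at hj'
    have hle : j ≤ n - m := by omega
    simp [hF, hG, vpFilter, vpQ, if_pos hle]
  have hsub : Finset.Ico (n - m + 1) n ⊆ Finset.range n := by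
    intro a ha
    simp only [Finset.mem_Ico] at ha
    simp only [Finset.mem_range]
    omega
  calc ∑ j ∈ Finset.range (n + m), F j
      = ∑ j ∈ Finset.range n, F j + ∑ j ∈ Finset.Ico (n - m + 1) n, (G j - F j) := by
        rw [hsplit, htail1, htail2, Finset.sum_congr rfl hcorr]
    _ = ∑ j ∈ Finset.range n, F j + ∑ j ∈ Finset.range n, (G j - F j) := by
        rw [Finset.sum_subset hsub hzero]
    _ = ∑ j ∈ Finset.range n, G j := by
        rw [← Finset.sum_add_distrib]
        apply Finset.sum_congr rfl
        intro j _
        ring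
end

section
/- For 0 < m < n and distinct indices i ≠ j in {0,…,n−1}, ⟨q_{n,j}^m, q̃_{n,i}^m⟩ = 0, and for each j, ⟨q_{n,j}^m, q̃_{n,j}^m⟩ = 1/(j+1) if 0 ≤ j ≤ n−m, while ⟨q_{n,j}^m, q̃_{n,j}^m⟩ = (m+n−j)²/(4m²(j+1)) + (m−n+j)²/(4m²(2n−j+1)) if n−m < j < n. -/
open Real MeasureTheory intervalIntegral Set

namespace VPaux

lemma int_cos_mul (k : ℝ) (hk : k ≠ 0) : ∫ θ in (0:ℝ)..π, Real.cos (k*θ) = Real.sin (k*π)/k := by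
  have := intervalIntegral.integral_comp_mul_left (fun x => Real.cos x) hk (a := 0) (b := π)
  simp [integral_cos] at this
  rw [this]
  field_simp

lemma int_sin_sin (p q : ℕ) :
    ∫ θ in (0:ℝ)..π, Real.sin ((p+1)*θ) * Real.sin ((q+1)*θ) =
      if p = q then π/2 else 0 := by
  have key : ∀ θ : ℝ, Real.sin (((p:ℝ)+1)*θ) * Real.sin (((q:ℝ)+1)*θ) =
      (Real.cos ((((p:ℝ)) - q)*θ) - Real.cos (((p:ℝ)+q+2)*θ))/2 := by
    intro θ
    have h := Real.cos_sub_cos ((((p:ℝ)) - q)*θ) (((p:ℝ)+q+2)*θ)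
    rw [show (((p:ℝ) - q)*θ + ((p:ℝ)+q+2)*θ)/2 = ((p:ℝ)+1)*θ by ring,
        show (((p:ℝ) - q)*θ - ((p:ℝ)+q+2)*θ)/2 = -(((q:ℝ)+1)*θ) by ring,
        Real.sin_neg] at h
    linarith
  simp only [key]
  rcases eq_or_ne p q with h | h
  · subst h
    have h2 : ((p:ℝ) + p + 2) ≠ 0 := by positivity
    rw [show ((p:ℝ) - p) = 0 by ring]
    simp only [zero_mul, Real.cos_zero, if_pos rfl]
    rw [intervalIntegral.integral_div, intervalIntegral.integral_sub intervalIntegrable_const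
      (by apply Continuous.intervalIntegrable; continuity), int_cos_mul _ h2]
    have : Real.sin (((p:ℝ)+p+2)*π) = 0 := by
      have := Real.sin_int_mul_pi ((p:ℤ)+p+2)
      push_cast at this; convert this using 2 <;> ring
    simp [this, pi_pos.le]
  · have hne : ((p:ℝ) - q) ≠ 0 := by
      have : (p:ℝ) ≠ q := Nat.cast_injective.ne h
      intro hc; apply this; linarith
    have h2 : ((p:ℝ) + q + 2) ≠ 0 := by positivity
    rw [if_neg h, intervalIntegral.integral_div, intervalIntegral.integral_sub
      (by apply Continuous.intervalIntegrable; continuity)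
      (by apply Continuous.intervalIntegrable; continuity), int_cos_mul _ hne, int_cos_mul _ h2]
    have e1 : Real.sin (((p:ℝ)-q)*π) = 0 := by
      have := Real.sin_int_mul_pi ((p:ℤ)-q)
      push_cast at this; convert this using 2 <;> ring
    have e2 : Real.sin (((p:ℝ)+q+2)*π) = 0 := by
      have := Real.sin_int_mul_pi ((p:ℤ)+q+2)
      push_cast at this; convert this using 2 <;> ring
    simp [e1, e2]

lemma arccos_lt_pi' {y : ℝ} (h : -1 < y) : Real.arccos y < π := by
  rw [Real.arccos]
  have := Real.neg_pi_div_two_lt_arcsin.2 h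
  linarith [Real.pi_pos]

lemma cos_image_Ioo : Real.cos '' Set.Ioo 0 π = Set.Ioo (-1:ℝ) 1 := by
  apply Set.Subset.antisymm
  · rintro y ⟨θ, ⟨h0, hπ⟩, rfl⟩
    constructor
    · calc (-1:ℝ) = Real.cos π := by simp
        _ < Real.cos θ := Real.strictAntiOn_cos ⟨h0.le, hπ.le⟩ ⟨Real.pi_pos.le, le_rfl⟩ hπ
    · calc Real.cos θ < Real.cos 0 :=
          Real.strictAntiOn_cos ⟨le_rfl, Real.pi_pos.le⟩ ⟨h0.le, hπ.le⟩ h0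
        _ = 1 := by simp
  · rintro y ⟨h1, h2⟩
    exact ⟨Real.arccos y, ⟨Real.arccos_pos.2 h2, arccos_lt_pi' h1⟩,
      Real.cos_arccos h1.le h2.le⟩

lemma cov_eqon {a b : ℕ} : Set.EqOn
    (fun θ => |(-Real.sin θ)| • (chebP a (Real.cos θ) * chebP b (Real.cos θ) *
      Real.sqrt (1 - Real.cos θ ^ 2)))
    (fun θ => (2/π) * (Real.sin ((a+1)*θ) * Real.sin ((b+1)*θ))) (Set.Ioo 0 π) := by
  intro θ ⟨h0, hπ⟩
  have hs : 0 < Real.sin θ := Real.sin_pos_of_pos_of_lt_pi h0 hπ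
  have hac : Real.arccos (Real.cos θ) = θ := Real.arccos_cos h0.le hπ.le
  have hsq : Real.sqrt (1 - Real.cos θ ^ 2) = Real.sin θ := by
    rw [show 1 - Real.cos θ ^ 2 = Real.sin θ ^ 2 by
      have := Real.sin_sq_add_cos_sq θ; linarith]
    exact Real.sqrt_sq hs.le
  have h2π : Real.sqrt (2/π) ^ 2 = 2/π := Real.sq_sqrt (by positivity)
  simp only [chebP, hac, hsq, abs_neg, abs_of_pos hs, smul_eq_mul]
  set s2 := Real.sqrt (2/π) with hs2def
  clear_value s2
  have key : ∀ Sa Sb : ℝ, Real.sin θ * (s2 * Sa / Real.sin θ *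
      (s2 * Sb / Real.sin θ) * Real.sin θ) = (2/π) * (Sa*Sb) := by
    intro Sa Sb
    rw [← h2π]
    field_simp
  exact key _ _

lemma hasDeriv : ∀ θ ∈ Set.Ioo (0:ℝ) π,
    HasDerivWithinAt Real.cos (-Real.sin θ) (Set.Ioo 0 π) θ :=
  fun θ _ => (Real.hasDerivAt_cos θ).hasDerivWithinAt

lemma injOn' : Set.InjOn Real.cos (Set.Ioo 0 π) :=
  Real.injOn_cos.mono Set.Ioo_subset_Icc_self

lemma cheb_orth (a b : ℕ) :
    (∫ x in (-1:ℝ)..1, chebP a x * chebP b x * Real.sqrt (1 - x ^ 2)) =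
      if a = b then 1 else 0 := by
  rw [intervalIntegral.integral_of_le (by norm_num), MeasureTheory.integral_Ioc_eq_integral_Ioo,
    ← cos_image_Ioo,
    MeasureTheory.integral_image_eq_integral_abs_deriv_smul measurableSet_Ioo hasDeriv injOn',
    MeasureTheory.setIntegral_congr_fun measurableSet_Ioo cov_eqon,
    ← MeasureTheory.integral_Ioc_eq_integral_Ioo,
    ← intervalIntegral.integral_of_le Real.pi_pos.le,
    intervalIntegral.integral_const_mul, int_sin_sin]
  rcases eq_or_ne a b with h | h
  · rw [if_pos h, if_pos h]
    field_simp
  · rw [if_neg h, if_neg h, mul_zero]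

lemma cheb_ii (a b : ℕ) :
    IntervalIntegrable (fun x => chebP a x * chebP b x * Real.sqrt (1 - x ^ 2))
      MeasureTheory.volume (-1) 1 := by
  rw [intervalIntegrable_iff_integrableOn_Ioo_of_le (by norm_num), ← cos_image_Ioo,
    MeasureTheory.integrableOn_image_iff_integrableOn_abs_deriv_smul measurableSet_Ioo
      hasDeriv injOn']
  apply MeasureTheory.IntegrableOn.congr_fun _ cov_eqon.symm measurableSet_Ioo
  exact ((Continuous.integrableOn_Icc (by continuity)).mono_set Set.Ioo_subset_Icc_self)

noncomputable def δ (a b : ℕ) : ℝ := if a = b then 1 else 0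

lemma iprod_expand (c1 c2 d1 d2 : ℝ) (a A b B : ℕ) :
    iprod (fun x => c1 * chebP a x + c2 * chebP A x)
          (fun x => d1 * chebP b x + d2 * chebP B x) =
      c1*d1 * δ a b + c1*d2 * δ a B + c2*d1 * δ A b + c2*d2 * δ A B := by
  unfold iprod
  have step : ∀ x : ℝ, (c1 * chebP a x + c2 * chebP A x) * (d1 * chebP b x + d2 * chebP B x) *
      Real.sqrt (1 - x ^ 2) =
      c1*d1 * (chebP a x * chebP b x * Real.sqrt (1 - x ^ 2)) +
      c1*d2 * (chebP a x * chebP B x * Real.sqrt (1 - x ^ 2)) +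
      (c2*d1 * (chebP A x * chebP b x * Real.sqrt (1 - x ^ 2)) +
      c2*d2 * (chebP A x * chebP B x * Real.sqrt (1 - x ^ 2))) := by
    intro x; ring
  simp only [step]
  rw [intervalIntegral.integral_add (((cheb_ii a b).const_mul _).add ((cheb_ii a B).const_mul _))
      (((cheb_ii A b).const_mul _).add ((cheb_ii A B).const_mul _)),
    intervalIntegral.integral_add ((cheb_ii a b).const_mul _) ((cheb_ii a B).const_mul _),
    intervalIntegral.integral_add ((cheb_ii A b).const_mul _) ((cheb_ii A B).const_mul _),
    intervalIntegral.integral_const_mul, intervalIntegral.integral_const_mul,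
    intervalIntegral.integral_const_mul, intervalIntegral.integral_const_mul,
    cheb_orth, cheb_orth, cheb_orth, cheb_orth]
  unfold δ
  ring

end VPaux

open VPaux in
theorem vpQ_vpQt_biorthogonality (n m : ℕ) (hm : 0 < m) (hmn : m < n) :
    (∀ i j, i < n → j < n → i ≠ j → iprod (vpQ n m j) (vpQt n m i) = 0) ∧
    (∀ j, j ≤ n - m → iprod (vpQ n m j) (vpQt n m j) = 1 / ((j : ℝ) + 1)) ∧
    (∀ j, n - m < j → j < n →
      iprod (vpQ n m j) (vpQt n m j) =
        ((m : ℝ) + n - j) ^ 2 / (4 * (m : ℝ) ^ 2 * ((j : ℝ) + 1)) +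
        ((m : ℝ) - n + j) ^ 2 / (4 * (m : ℝ) ^ 2 * (2 * (n : ℝ) - j + 1))) := by
  -- representations
  have hQle : ∀ j, j ≤ n - m → vpQ n m j = fun x => 1 * chebP j x + 0 * chebP j x := by
    intro j hj; funext x; simp [vpQ, hj]
  have hQgt : ∀ j, ¬ (j ≤ n - m) → vpQ n m j = fun x =>
      (((m : ℝ) + n - j) / (2 * m)) * chebP j x +
      (-(((m : ℝ) - n + j) / (2 * m))) * chebP (2 * n - j) x := by
    intro j hj; funext x; simp only [vpQ, if_neg hj]; ring
  have hQtle : ∀ j, j ≤ n - m → vpQt n m j = fun x =>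
      (1 / ((j:ℝ) + 1)) * chebP j x + 0 * chebP j x := by
    intro j hj; funext x; simp only [vpQt, if_pos hj]; ring
  have hQtgt : ∀ j, ¬ (j ≤ n - m) → vpQt n m j = fun x =>
      (((m : ℝ) + n - j) / (2 * m) / ((j:ℝ) + 1)) * chebP j x +
      (-(((m : ℝ) - n + j) / (2 * m) / (2 * (n : ℝ) - j + 1))) * chebP (2 * n - j) x := by
    intro j hj; funext x; simp only [vpQt, if_neg hj]; ring
  refine ⟨?_, ?_, ?_⟩
  · intro i j hi hj hij
    have hji : j ≠ i := fun h => hij h.symm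
    by_cases hjle : j ≤ n - m <;> by_cases hile : i ≤ n - m
    · rw [hQle j hjle, hQtle i hile, iprod_expand]
      rw [show δ j i = 0 from if_neg hji]
      ring
    · rw [hQle j hjle, hQtgt i hile, iprod_expand]
      rw [show δ j i = 0 from if_neg hji, show δ j (2*n-i) = 0 from if_neg (by omega)]
      ring
    · rw [hQgt j hjle, hQtle i hile, iprod_expand]
      rw [show δ j i = 0 from if_neg hji, show δ (2*n-j) i = 0 from if_neg (by omega)]
      ring
    · rw [hQgt j hjle, hQtgt i hile, iprod_expand]
      rw [show δ j i = 0 from if_neg hji, show δ j (2*n-i) = 0 from if_neg (by omega),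
        show δ (2*n-j) i = 0 from if_neg (by omega),
        show δ (2*n-j) (2*n-i) = 0 from if_neg (by omega)]
      ring
  · intro j hj
    rw [hQle j hj, hQtle j hj, iprod_expand, show δ j j = 1 from if_pos rfl]
    ring
  · intro j hj1 hj2
    have hjle : ¬ (j ≤ n - m) := by omega
    rw [hQgt j hjle, hQtgt j hjle, iprod_expand,
      show δ j j = 1 from if_pos rfl, show δ (2*n-j) (2*n-j) = 1 from if_pos rfl,
      show δ j (2*n-j) = 0 from if_neg (by omega),
      show δ (2*n-j) j = 0 from if_neg (by omega)]
    have hm' : (m:ℝ) ≠ 0 := Nat.cast_ne_zero.2 hm.ne'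
    have hj1' : ((j:ℝ) + 1) ≠ 0 := by positivity
    have hjn : (j:ℝ) < n := by exact_mod_cast hj2
    have h2n : (2 * (n : ℝ) - j + 1) ≠ 0 := by nlinarith
    field_simp
    ring
end

section
/- If f̃ = ∑_{j=0}^{n−1} f̃_j q̃_{n,j}^m, then V_n^m f̃ = ∑_{j=0}^{n−1} f̃_j w_j q_{n,j}^m, where w_j = 1/(j+1) for 0 ≤ j ≤ n−m and w_j = (1/(2m))·((m+n−j)/(j+1) + (j−n+m)/(2n−j+1)) for n−m < j < n. -/
/-- The VP interpolation operator `V_n^m f = ∑_{k=1}^n f(x_k) Φ_{n,k}^m`. -/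
noncomputable def vpV (n m : ℕ) (f : ℝ → ℝ) (x : ℝ) : ℝ :=
  ∑ k ∈ Finset.Icc 1 n, f (chebNode n k) * vpPhi n m k x

/-- The weights `w_j` of Lemma on `V_n^m` applied to the modified basis. -/
noncomputable def vpW (n m j : ℕ) : ℝ :=
  if j ≤ n - m then 1 / ((j : ℝ) + 1)
  else (1 / (2 * (m : ℝ))) *
    (((m : ℝ) + n - j) / ((j : ℝ) + 1) + ((j : ℝ) - n + m) / (2 * (n : ℝ) - j + 1))

section VPaux
open Real Finset

lemma cos_sum_range (N : ℕ) (hN : 0 < N) (c : ℤ) :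
    ∑ k ∈ Finset.range N, Real.cos (k * ((c : ℝ) * Real.pi / N)) =
      if (2 * (N:ℤ)) ∣ c then (N:ℝ) else if Even c then 0 else 1 := by
  have hNR : ((N:ℝ)) ≠ 0 := Nat.cast_ne_zero.mpr hN.ne'
  by_cases hdvd : (2 * (N:ℤ)) ∣ c
  · obtain ⟨t, ht⟩ := hdvd
    rw [if_pos ⟨t, ht⟩]
    have : ∀ k ∈ Finset.range N, Real.cos (k * ((c : ℝ) * Real.pi / N)) = 1 := by
      intro k _
      have : (k:ℝ) * ((c:ℝ) * Real.pi / N) = ((k * t : ℤ) : ℝ) * (2 * Real.pi) := by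
        have : ((c:ℝ)) = 2 * N * t := by exact_mod_cast congrArg (Int.cast : ℤ → ℝ) ht
        rw [this]; push_cast; field_simp
      rw [this, Real.cos_int_mul_two_pi]
    rw [Finset.sum_congr rfl this]; simp
  · rw [if_neg hdvd]
    set φ : ℝ := (c:ℝ) * Real.pi / N with hφ
    have hs : Real.sin (φ / 2) ≠ 0 := by
      intro h
      rcases Real.sin_eq_zero_iff.mp h with ⟨t, htt⟩
      apply hdvd
      refine ⟨t, ?_⟩
      have hπ : Real.pi ≠ 0 := Real.pi_ne_zero
      have : (c:ℝ) = 2 * N * t := by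
        rw [hφ] at htt; field_simp at htt
        have h' : (2 * (N:ℝ) * t) * Real.pi = (c:ℝ) * Real.pi := by linear_combination Real.pi * htt
        have := mul_right_cancel₀ hπ h'
        linarith
      exact_mod_cast this
    have key : ∀ k : ℕ, Real.sin (((k:ℝ) + 1) * φ - φ / 2) - Real.sin ((k:ℝ) * φ - φ / 2)
        = 2 * Real.sin (φ / 2) * Real.cos ((k:ℝ) * φ) := by
      intro k
      rw [Real.sin_sub_sin,
        show ((((k:ℝ) + 1) * φ - φ / 2) - ((k:ℝ) * φ - φ / 2)) / 2 = φ / 2 by ring,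
        show ((((k:ℝ) + 1) * φ - φ / 2) + ((k:ℝ) * φ - φ / 2)) / 2 = (k:ℝ) * φ by ring]
    have tel : ∑ k ∈ Finset.range N, (Real.sin (((k:ℝ)+1) * φ - φ/2) - Real.sin ((k:ℝ) * φ - φ/2))
        = Real.sin ((N:ℝ) * φ - φ/2) - Real.sin ((0:ℝ) * φ - φ/2) := by
      have := Finset.sum_range_sub (fun k : ℕ => Real.sin ((k:ℝ) * φ - φ/2)) N
      simpa [Nat.cast_succ] using this
    have hNφ : (N:ℝ) * φ = (c:ℝ) * Real.pi := by rw [hφ]; field_simp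
    have h2T : 2 * Real.sin (φ/2) * (∑ k ∈ Finset.range N, Real.cos ((k:ℝ) * φ))
        = (1 - (-1:ℝ)^c) * Real.sin (φ/2) := by
      rw [Finset.mul_sum]
      rw [Finset.sum_congr rfl fun k _ => (key k).symm, tel, hNφ]
      rw [show (c:ℝ) * Real.pi - φ/2 = (c:ℝ) * Real.pi - φ/2 from rfl]
      have := Real.sin_int_mul_pi_sub (φ/2) c
      rw [this]
      simp [Real.sin_neg]
      ring
    have hT : (∑ k ∈ Finset.range N, Real.cos ((k:ℝ) * φ)) = (1 - (-1:ℝ)^c) / 2 := by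
      have h' : Real.sin (φ/2) * (2 * (∑ k ∈ Finset.range N, Real.cos ((k:ℝ) * φ)))
          = Real.sin (φ/2) * (1 - (-1:ℝ)^c) := by linear_combination h2T
      have := mul_left_cancel₀ hs h'
      linarith
    rw [hT]
    by_cases hev : Even c
    · rw [if_pos hev, hev.neg_one_zpow]; norm_num
    · rw [if_neg hev, (Int.not_even_iff_odd.mp hev).neg_one_zpow]; norm_num

lemma sum_Icc_one (n : ℕ) (f : ℕ → ℝ) :
    ∑ k ∈ Finset.Icc 1 n, f k = (∑ k ∈ Finset.range (n+1), f k) - f 0 := by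
  have h : Finset.range (n+1) = insert 0 (Finset.Icc 1 n) := by
    ext k; simp [Finset.mem_range, Finset.mem_Icc]; omega
  rw [h, Finset.sum_insert (by simp)]; ring

lemma not_dvd_helper (D c : ℤ) (hD : 0 < D) (hlow : -D < c) (hhigh : c < 2 * D)
    (h0 : c ≠ 0) (hD' : c ≠ D) : ¬ D ∣ c := by
  rintro ⟨t, ht⟩
  have ht2 : t < 2 := by nlinarith
  have ht1 : -1 < t := by nlinarith
  interval_cases t
  · exact h0 (by omega)
  · exact hD' (by omega)

lemma disc_orth (n a b : ℕ) (ha : 1 ≤ a) (hb : 1 ≤ b)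
    (ha2 : a < 2 * (n + 1)) (hb2 : b < 2 * (n + 1)) :
    ∑ k ∈ Finset.Icc 1 n,
        (2 * Real.sin ((a:ℝ) * ((k:ℝ) * Real.pi / (n+1))) * Real.sin ((b:ℝ) * ((k:ℝ) * Real.pi / (n+1))))
      = ((n:ℝ) + 1) * ((if a = b then 1 else 0) - (if a + b = 2 * (n + 1) then 1 else 0)) := by
  have hN : 0 < n + 1 := Nat.succ_pos n
  have hcast : ((n+1 : ℕ) : ℝ) = (n:ℝ) + 1 := by push_cast; ring
  have hterm : ∀ k : ℕ,
      2 * Real.sin ((a:ℝ) * ((k:ℝ) * Real.pi / (n+1))) * Real.sin ((b:ℝ) * ((k:ℝ) * Real.pi / (n+1)))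
      = Real.cos ((k:ℝ) * ((((a:ℤ) - b : ℤ):ℝ) * Real.pi / ((n+1:ℕ):ℝ)))
        - Real.cos ((k:ℝ) * ((((a:ℤ) + b : ℤ):ℝ) * Real.pi / ((n+1:ℕ):ℝ))) := by
    intro k
    rw [Real.cos_sub_cos]
    push_cast
    rw [show ((k:ℝ) * (((a:ℝ) - b) * Real.pi / ((n:ℝ)+1)) + (k:ℝ) * (((a:ℝ) + b) * Real.pi / ((n:ℝ)+1))) / 2
          = (a:ℝ) * ((k:ℝ) * Real.pi / ((n:ℝ)+1)) by ring,
        show ((k:ℝ) * (((a:ℝ) - b) * Real.pi / ((n:ℝ)+1)) - (k:ℝ) * (((a:ℝ) + b) * Real.pi / ((n:ℝ)+1))) / 2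
          = -((b:ℝ) * ((k:ℝ) * Real.pi / ((n:ℝ)+1))) by ring,
        Real.sin_neg]
    ring
  rw [Finset.sum_congr rfl fun k _ => hterm k, Finset.sum_sub_distrib,
    sum_Icc_one n (fun k => Real.cos ((k:ℝ) * ((((a:ℤ) - b : ℤ):ℝ) * Real.pi / ((n+1:ℕ):ℝ)))),
    sum_Icc_one n (fun k => Real.cos ((k:ℝ) * ((((a:ℤ) + b : ℤ):ℝ) * Real.pi / ((n+1:ℕ):ℝ)))),
    cos_sum_range (n+1) hN ((a:ℤ) - b), cos_sum_range (n+1) hN ((a:ℤ) + b)]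
  by_cases hab : a = b
  · subst hab
    rw [if_pos (by simp : (2 * ((n+1:ℕ):ℤ)) ∣ ((a:ℤ) - a)), if_pos rfl]
    by_cases han : a + a = 2 * (n + 1)
    · rw [if_pos han, if_pos (Dvd.intro 1 (by push_cast; omega) :
        (2 * ((n+1:ℕ):ℤ)) ∣ ((a:ℤ) + a))]
      push_cast; ring
    · rw [if_neg han,
        if_neg (not_dvd_helper (2 * ((n+1:ℕ):ℤ)) ((a:ℤ) + a)
          (by positivity) (by push_cast; omega) (by push_cast; omega)
          (by push_cast; omega) (by push_cast; omega)),
        if_pos (by exact ⟨a, by ring⟩ : Even ((a:ℤ) + a))]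
      push_cast; ring
  · rw [if_neg hab,
      if_neg (not_dvd_helper (2 * ((n+1:ℕ):ℤ)) ((a:ℤ) - b)
        (by positivity) (by push_cast; omega) (by push_cast; omega)
        (by push_cast; omega) (by push_cast; omega))]
    have hpar : Even ((a:ℤ) - b) ↔ Even ((a:ℤ) + b) := by
      constructor <;> (intro h; rw [Int.even_iff] at h ⊢; omega)
    by_cases hsum : a + b = 2 * (n + 1)
    · rw [if_pos hsum, if_pos (Dvd.intro 1 (by push_cast; omega) :
        (2 * ((n+1:ℕ):ℤ)) ∣ ((a:ℤ) + b)),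
        if_pos (hpar.mpr (by rw [Int.even_iff]; omega))]
      push_cast; ring
    · rw [if_neg hsum,
        if_neg (not_dvd_helper (2 * ((n+1:ℕ):ℤ)) ((a:ℤ) + b)
          (by positivity) (by push_cast; omega) (by push_cast; omega)
          (by push_cast; omega) (by push_cast; omega))]
      by_cases hev : Even ((a:ℤ) + b)
      · rw [if_pos (hpar.mpr hev), if_pos hev]; push_cast; ring
      · rw [if_neg (fun h => hev (hpar.mp h)), if_neg hev]; push_cast; ring

/- ===== node evaluation ===== -/
lemma theta_mem (n k : ℕ) (hk1 : 1 ≤ k) (hkn : k ≤ n) :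
    0 < (k:ℝ) * Real.pi / (n + 1) ∧ (k:ℝ) * Real.pi / (n + 1) < Real.pi := by
  have hπ := Real.pi_pos
  have hk : (1:ℝ) ≤ (k:ℝ) := by exact_mod_cast hk1
  have hkn' : (k:ℝ) ≤ (n:ℝ) := by exact_mod_cast hkn
  have hn1 : (0:ℝ) < (n:ℝ) + 1 := by positivity
  constructor
  · apply div_pos (by nlinarith) hn1
  · rw [div_lt_iff₀ hn1]; nlinarith

lemma sin_node_ne (n k : ℕ) (hk1 : 1 ≤ k) (hkn : k ≤ n) :
    Real.sin ((k:ℝ) * Real.pi / (n + 1)) ≠ 0 := by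
  obtain ⟨h1, h2⟩ := theta_mem n k hk1 hkn
  exact (Real.sin_pos_of_pos_of_lt_pi h1 h2).ne'

lemma chebP_node (n j k : ℕ) (hk1 : 1 ≤ k) (hkn : k ≤ n) :
    chebP j (chebNode n k) =
      Real.sqrt (2 / Real.pi) * Real.sin (((j:ℝ) + 1) * ((k:ℝ) * Real.pi / (n + 1)))
        / Real.sin ((k:ℝ) * Real.pi / (n + 1)) := by
  obtain ⟨h1, h2⟩ := theta_mem n k hk1 hkn
  unfold chebP chebNode
  rw [Real.arccos_cos h1.le h2.le]

lemma node_prod (n j r k : ℕ) (hk1 : 1 ≤ k) (hkn : k ≤ n) :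
    chebWeight n k * chebP j (chebNode n k) * chebP r (chebNode n k) =
      (1 / ((n:ℝ) + 1)) *
        (2 * Real.sin (((j:ℝ) + 1) * ((k:ℝ) * Real.pi / (n + 1)))
          * Real.sin (((r:ℝ) + 1) * ((k:ℝ) * Real.pi / (n + 1)))) := by
  have hs := sin_node_ne n k hk1 hkn
  have hπ := Real.pi_pos
  have hsq : Real.sqrt (2 / Real.pi) ^ 2 = 2 / Real.pi :=
    Real.sq_sqrt (by positivity)
  rw [chebP_node n j k hk1 hkn, chebP_node n r k hk1 hkn]
  unfold chebWeight
  set C := Real.sqrt (2 / Real.pi) with hC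
  set s := Real.sin ((k:ℝ) * Real.pi / (n + 1)) with hsdef
  set S1 := Real.sin (((j:ℝ) + 1) * ((k:ℝ) * Real.pi / (n + 1))) with hS1
  set S2 := Real.sin (((r:ℝ) + 1) * ((k:ℝ) * Real.pi / (n + 1))) with hS2
  have hn1 : ((n:ℝ) + 1) ≠ 0 := by positivity
  have key : Real.pi / ((n:ℝ) + 1) * s ^ 2 * (C * S1 / s) * (C * S2 / s)
      = Real.pi / ((n:ℝ) + 1) * C ^ 2 * S1 * S2 := by
    field_simp
  rw [key, hsq]
  field_simp

lemma disc_orth_cheb (n j r : ℕ) (hj : j + 1 < 2 * (n + 1)) (hr : r + 1 < 2 * (n + 1)) :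
    ∑ k ∈ Finset.Icc 1 n, chebWeight n k * chebP j (chebNode n k) * chebP r (chebNode n k)
      = (if j = r then (1:ℝ) else 0) - (if j + r = 2 * n then 1 else 0) := by
  rw [Finset.sum_congr rfl (fun k hk => by
      obtain ⟨hk1, hkn⟩ := Finset.mem_Icc.mp hk
      exact node_prod n j r k hk1 hkn),
    ← Finset.mul_sum]
  have := disc_orth n (j+1) (r+1) (Nat.le_add_left 1 j) (Nat.le_add_left 1 r) hj hr
  push_cast at this
  rw [this]
  have hn1 : ((n:ℝ) + 1) ≠ 0 := by positivity
  simp only [show ((j:ℕ) + 1 + (r + 1) = 2 * (n + 1)) ↔ (j + r = 2 * n) by omega]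
  rw [one_div, inv_mul_cancel_left₀ hn1]

lemma vpV_chebP (n m j : ℕ) (hmn : m < n) (hj : j + 1 < 2 * (n + 1)) (x : ℝ) :
    vpV n m (chebP j) x = ∑ r ∈ Finset.range (n + m), vpFilter n m r *
      ((if j = r then 1 else 0) - (if j + r = 2 * n then 1 else 0)) * chebP r x := by
  unfold vpV vpPhi
  have step : ∀ k : ℕ,
      chebP j (chebNode n k) * (chebWeight n k *
        ∑ r ∈ Finset.range (n + m), vpFilter n m r * chebP r (chebNode n k) * chebP r x)
      = ∑ r ∈ Finset.range (n + m), vpFilter n m r *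
          (chebWeight n k * chebP j (chebNode n k) * chebP r (chebNode n k)) * chebP r x := by
    intro k
    rw [Finset.mul_sum, Finset.mul_sum]
    exact Finset.sum_congr rfl fun r _ => by ring
  rw [Finset.sum_congr rfl fun k _ => step k, Finset.sum_comm]
  refine Finset.sum_congr rfl fun r hr => ?_
  rw [← Finset.sum_mul, ← Finset.mul_sum,
    disc_orth_cheb n j r hj (by have := Finset.mem_range.mp hr; omega)]

lemma sum_delta_filter (n m j : ℕ) (g : ℕ → ℝ) :
    ∑ r ∈ Finset.range (n + m), (if j = r then (1:ℝ) else 0) * g r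
      = if j < n + m then g j else 0 := by
  have : ∀ r, (if j = r then (1:ℝ) else 0) * g r = if j = r then g r else 0 := by
    intro r; split <;> simp
  rw [Finset.sum_congr rfl fun r _ => this r, Finset.sum_ite_eq]
  simp [Finset.mem_range]

lemma vpV_chebP_eval (n m j : ℕ) (hmn : m < n) (hj : j ≤ 2 * n) (x : ℝ) :
    vpV n m (chebP j) x =
      (if j < n + m then vpFilter n m j * chebP j x else 0)
      - (if 2 * n - j < n + m then vpFilter n m (2 * n - j) * chebP (2 * n - j) x else 0) := by
  rw [vpV_chebP n m j hmn (by omega) x]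
  have h1 : ∀ r, vpFilter n m r *
        ((if j = r then (1:ℝ) else 0) - (if j + r = 2 * n then 1 else 0)) * chebP r x
      = (if j = r then (1:ℝ) else 0) * (vpFilter n m r * chebP r x)
        - (if 2 * n - j = r then (1:ℝ) else 0) * (vpFilter n m r * chebP r x) := by
    intro r
    simp only [show (j + r = 2 * n) ↔ (2 * n - j = r) from by omega]
    ring
  rw [Finset.sum_congr rfl fun r _ => h1 r, Finset.sum_sub_distrib,
    sum_delta_filter n m j (fun r => vpFilter n m r * chebP r x),
    sum_delta_filter n m (2 * n - j) (fun r => vpFilter n m r * chebP r x)]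

lemma vpV_finsum (n m : ℕ) (s : Finset ℕ) (g : ℕ → ℝ → ℝ) (x : ℝ) :
    vpV n m (fun t => ∑ j ∈ s, g j t) x = ∑ j ∈ s, vpV n m (g j) x := by
  unfold vpV
  simp_rw [Finset.sum_mul]
  exact Finset.sum_comm

lemma vpV_smul (n m : ℕ) (c : ℝ) (g : ℝ → ℝ) (x : ℝ) :
    vpV n m (fun t => c * g t) x = c * vpV n m g x := by
  simp [vpV, Finset.mul_sum, mul_assoc]

lemma vpV_sub (n m : ℕ) (g h : ℝ → ℝ) (x : ℝ) :
    vpV n m (fun t => g t - h t) x = vpV n m g x - vpV n m h x := by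
  simp [vpV, sub_mul, Finset.sum_sub_distrib]

lemma vpV_chebP_low (n m j : ℕ) (hm : 0 < m) (hmn : m < n) (h : j ≤ n - m) (x : ℝ) :
    vpV n m (chebP j) x = chebP j x := by
  rw [vpV_chebP_eval n m j hmn (by omega) x,
    if_pos (by omega : j < n + m), if_neg (by omega : ¬ 2 * n - j < n + m)]
  unfold vpFilter
  rw [if_pos h]; ring

lemma vpV_chebP_mid (n m j : ℕ) (hm : 0 < m) (hmn : m < n) (h1 : n - m < j) (h2 : j < n)
    (x : ℝ) : vpV n m (chebP j) x
      = ((m:ℝ) + n - j) / (2 * m) * chebP j x - ((m:ℝ) - n + j) / (2 * m) * chebP (2 * n - j) x := by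
  rw [vpV_chebP_eval n m j hmn (by omega) x,
    if_pos (by omega : j < n + m), if_pos (by omega : 2 * n - j < n + m)]
  unfold vpFilter
  rw [if_neg (by omega : ¬ j ≤ n - m), if_neg (by omega : ¬ 2 * n - j ≤ n - m)]
  have hc : ((2 * n - j : ℕ) : ℝ) = 2 * (n:ℝ) - j := by
    have h3 : j ≤ 2 * n := by omega
    push_cast [h3]; ring
  rw [hc]; ring

lemma vpV_chebP_high (n m j : ℕ) (hm : 0 < m) (hmn : m < n) (h1 : n - m < j) (h2 : j < n)
    (x : ℝ) : vpV n m (chebP (2 * n - j)) x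
      = ((m:ℝ) - n + j) / (2 * m) * chebP (2 * n - j) x - ((m:ℝ) + n - j) / (2 * m) * chebP j x := by
  rw [vpV_chebP_eval n m (2 * n - j) hmn (by omega) x,
    show 2 * n - (2 * n - j) = j from by omega,
    if_pos (by omega : 2 * n - j < n + m), if_pos (by omega : j < n + m)]
  unfold vpFilter
  rw [if_neg (by omega : ¬ 2 * n - j ≤ n - m), if_neg (by omega : ¬ j ≤ n - m)]
  have hc : ((2 * n - j : ℕ) : ℝ) = 2 * (n:ℝ) - j := by
    have h3 : j ≤ 2 * n := by omega
    push_cast [h3]; ring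
  rw [hc]; ring

lemma vpV_vpQt (n m j : ℕ) (hm : 0 < m) (hmn : m < n) (hj : j < n) (x : ℝ) :
    vpV n m (vpQt n m j) x = vpW n m j * vpQ n m j x := by
  by_cases h : j ≤ n - m
  · have hfun : vpQt n m j = fun t => (1 / ((j:ℝ) + 1)) * chebP j t := by
      funext t; simp only [vpQt, if_pos h]; ring
    rw [hfun, vpV_smul, vpV_chebP_low n m j hm hmn h x]
    simp only [vpQ, vpW, if_pos h]
  · have hfun : vpQt n m j = fun t =>
        (((m:ℝ) + n - j) / (2 * m) / ((j:ℝ) + 1)) * chebP j t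
        - (((m:ℝ) - n + j) / (2 * m) / (2 * (n:ℝ) - j + 1)) * chebP (2 * n - j) t := by
      funext t; simp only [vpQt, if_neg h]; ring
    rw [hfun, vpV_sub, vpV_smul, vpV_smul,
      vpV_chebP_mid n m j hm hmn (by omega) hj x,
      vpV_chebP_high n m j hm hmn (by omega) hj x]
    simp only [vpQ, vpW, if_neg h]
    have hjn : (j:ℝ) < n := by exact_mod_cast hj
    have hK : (2 * (n:ℝ) - j + 1) ≠ 0 := by nlinarith [Nat.cast_nonneg (α := ℝ) n]
    have hJ : ((j:ℝ) + 1) ≠ 0 := by positivity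
    have hm' : (0:ℝ) < m := by exact_mod_cast hm
    have hM : (2 * (m:ℝ)) ≠ 0 := by positivity
    field_simp
    ring

end VPaux

section
open Real Finset

theorem vpV_on_modified_basis (n m : ℕ) (hm : 0 < m) (hmn : m < n) (a : ℕ → ℝ) :
    ∀ x : ℝ,
      vpV n m (fun t => ∑ j ∈ Finset.range n, a j * vpQt n m j t) x =
        ∑ j ∈ Finset.range n, a j * vpW n m j * vpQ n m j x := by
  intro x
  rw [vpV_finsum n m (Finset.range n) (fun j t => a j * vpQt n m j t) x]
  refine Finset.sum_congr rfl fun j hj => ?_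
  rw [vpV_smul n m (a j) (vpQt n m j) x,
    vpV_vpQt n m j hm hmn (Finset.mem_range.mp hj) x]
  ring

end
end
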